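/- Let x ≠ y in ℝ³, let G : ℝ³ \ {0} → ℂ be differentiable at x − y, let a, b ∈ ℝ³, let A be a real 3×3 matrix, and let τ₁, τ₂ ∈ ℝ³ be linearly independent with ν = (τ₁ × τ₂)/‖τ₁ × τ₂‖. Define J(t) = ‖((I + tA)τ₁) × ((I + tA)τ₂)‖ / ‖τ₁ × τ₂‖. Then the function t ↦ G( (x − y) + t(a − b) ) · J(t) is differentiable at t = 0 and its derivative equals DG(x − y)[a − b] + G(x − y) · ( tr A − ⟨A ν, ν⟩ ), where DG(x − y)[a − b] is the Fréchet derivative of G at x − y applied to a − b. -/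

import Mathlib

open Matrix in
/-- Pointwise (d = 3) form of the first-derivative kernel formula of Corollary 4.3 of
the paper: `(d/dt)|₀ [G((x−y) + t(a−b)) J(t)] = DG(x−y)[a−b] + G(x−y)(trA − ⟨Aν,ν⟩)`. -/
theorem stmt17 (x y : Fin 3 → ℝ) (hxy : x ≠ y)
    (G : (Fin 3 → ℝ) → ℂ) (hG : DifferentiableAt ℝ G (x - y))
    (a b : Fin 3 → ℝ) (A : Matrix (Fin 3) (Fin 3) ℝ)
    (τ₁ τ₂ : Fin 3 → ℝ) (hτ : LinearIndependent ℝ ![τ₁, τ₂])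
    (ν : Fin 3 → ℝ)
    (hν : ν = (Real.sqrt (crossProduct τ₁ τ₂ ⬝ᵥ crossProduct τ₁ τ₂))⁻¹ • crossProduct τ₁ τ₂)
    (J : ℝ → ℝ)
    (hJ : ∀ t : ℝ, J t =
      Real.sqrt (crossProduct ((1 + t • A).mulVec τ₁) ((1 + t • A).mulVec τ₂) ⬝ᵥ
        crossProduct ((1 + t • A).mulVec τ₁) ((1 + t • A).mulVec τ₂)) /
      Real.sqrt (crossProduct τ₁ τ₂ ⬝ᵥ crossProduct τ₁ τ₂)) :
    HasDerivAt (fun t : ℝ => G ((x - y) + t • (a - b)) * (J t : ℂ))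
      (fderiv ℝ G (x - y) (a - b) +
        G (x - y) * ((A.trace - A.mulVec ν ⬝ᵥ ν : ℝ) : ℂ)) 0 := by
  set c : Fin 3 → ℝ := crossProduct τ₁ τ₂ with hc_def
  have hc : c ≠ 0 := crossProduct_ne_zero_iff_linearIndependent.mpr hτ
  set k0 : ℝ := c ⬝ᵥ c with hk0_def
  have hk0nn : 0 ≤ k0 := Finset.sum_nonneg fun i _ => mul_self_nonneg _
  have hk0 : 0 < k0 := by
    rcases hk0nn.lt_or_eq with h | h
    · exact h
    · exact absurd ((dotProduct_self_eq_zero).mp h.symm) hc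
  set k1 : ℝ := 2 * (A.trace * k0 - A.mulVec c ⬝ᵥ c) with hk1_def
  set k2 : ℝ := (crossProduct (A.mulVec τ₁) τ₂ + crossProduct τ₁ (A.mulVec τ₂)) ⬝ᵥ
         (crossProduct (A.mulVec τ₁) τ₂ + crossProduct τ₁ (A.mulVec τ₂))
        + 2 * (c ⬝ᵥ crossProduct (A.mulVec τ₁) (A.mulVec τ₂)) with hk2_def
  set k3 : ℝ := 2 * ((crossProduct (A.mulVec τ₁) τ₂ + crossProduct τ₁ (A.mulVec τ₂)) ⬝ᵥ
          crossProduct (A.mulVec τ₁) (A.mulVec τ₂)) with hk3_def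
  set k4 : ℝ := crossProduct (A.mulVec τ₁) (A.mulVec τ₂) ⬝ᵥ
      crossProduct (A.mulVec τ₁) (A.mulVec τ₂) with hk4_def
  have hpoly : ∀ t : ℝ,
      crossProduct ((1 + t • A).mulVec τ₁) ((1 + t • A).mulVec τ₂) ⬝ᵥ
        crossProduct ((1 + t • A).mulVec τ₁) ((1 + t • A).mulVec τ₂)
      = k0 + k1 * t + k2 * t^2 + k3 * t^3 + k4 * t^4 := by
    intro t
    simp only [hc_def, hk0_def, hk1_def, hk2_def, hk3_def, hk4_def]
    simp [cross_apply, dotProduct, mulVec, Matrix.add_mulVec, Matrix.one_mulVec,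
      Matrix.smul_mulVec, Matrix.trace, Matrix.diag, Fin.sum_univ_three, Pi.add_apply,
      Pi.smul_apply, smul_eq_mul]
    ring
  -- J in polynomial form
  have hJ' : J = fun t => Real.sqrt (k0 + k1*t + k2*t^2 + k3*t^3 + k4*t^4) / Real.sqrt k0 := by
    funext t
    rw [hJ t, hpoly t]
  -- derivative of the inner polynomial at 0
  have hfpoly : HasDerivAt (fun t : ℝ => k0 + k1*t + k2*t^2 + k3*t^3 + k4*t^4) k1 0 := by
    have h1 : HasDerivAt (fun t : ℝ => k1 * t) k1 0 := by
      simpa using (hasDerivAt_id (0:ℝ)).const_mul k1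
    have h2 : HasDerivAt (fun t : ℝ => k2 * t^2) 0 0 := by
      simpa using (hasDerivAt_pow 2 (0:ℝ)).const_mul k2
    have h3 : HasDerivAt (fun t : ℝ => k3 * t^3) 0 0 := by
      simpa using (hasDerivAt_pow 3 (0:ℝ)).const_mul k3
    have h4 : HasDerivAt (fun t : ℝ => k4 * t^4) 0 0 := by
      simpa using (hasDerivAt_pow 4 (0:ℝ)).const_mul k4
    simpa [add_assoc] using (((h1.add h2).add h3).add h4).const_add k0
  have hval0 : (fun t : ℝ => k0 + k1*t + k2*t^2 + k3*t^3 + k4*t^4) 0 = k0 := by norm_num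
  have hsq : HasDerivAt (fun t : ℝ => Real.sqrt (k0 + k1*t + k2*t^2 + k3*t^3 + k4*t^4))
      (k1 / (2 * Real.sqrt k0)) 0 := by
    have h := hfpoly.sqrt (by norm_num [hk0.ne'])
    norm_num at h
    convert h using 2 <;> norm_num
  have hJd : HasDerivAt J (k1 / (2 * k0)) 0 := by
    rw [hJ']
    have := hsq.div_const (Real.sqrt k0)
    rw [div_div, mul_assoc, Real.mul_self_sqrt hk0nn] at this
    exact this
  have hsqrt0 : Real.sqrt k0 ≠ 0 := (Real.sqrt_pos.mpr hk0).ne'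
  have hJ0 : J 0 = 1 := by
    rw [hJ']
    simp [div_self hsqrt0]
  -- derivative value identity
  have hAν : A.mulVec ν ⬝ᵥ ν = (A.mulVec c ⬝ᵥ c) / k0 := by
    rw [hν]
    rw [Matrix.mulVec_smul, smul_dotProduct, dotProduct_smul]
    rw [smul_eq_mul, smul_eq_mul, ← mul_assoc, ← mul_inv, Real.mul_self_sqrt hk0nn]
    ring
  have hderiv_val : k1 / (2 * k0) = A.trace - A.mulVec ν ⬝ᵥ ν := by
    rw [hAν, hk1_def]
    field_simp
  -- complexified J derivative
  have hJC : HasDerivAt (fun t : ℝ => ((J t : ℝ) : ℂ)) ((A.trace - A.mulVec ν ⬝ᵥ ν : ℝ) : ℂ) 0 := by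
    rw [← hderiv_val]
    exact hJd.ofReal_comp
  -- G part
  have hcurve : HasDerivAt (fun t : ℝ => (x - y) + t • (a - b)) (a - b) 0 := by
    simpa using ((hasDerivAt_id (0:ℝ)).smul_const (a - b)).const_add (x - y)
  have hGc : HasDerivAt (fun t : ℝ => G ((x - y) + t • (a - b)))
      (fderiv ℝ G (x - y) (a - b)) 0 := by
    have hG' : HasFDerivAt G (fderiv ℝ G (x - y)) ((fun t : ℝ => (x - y) + t • (a - b)) 0) := by
      simpa using hG.hasFDerivAt
    exact hG'.comp_hasDerivAt 0 hcurve
  have := hGc.mul hJC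
  simp only [zero_smul, add_zero, hJ0, Complex.ofReal_one, mul_one] at this
  convert this using 1
  all_goals rfl
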